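/- Let M be a nonempty finite set, λ > 0, v : M → ℝ positive, k ∈ ℕ with k ≤ |M|, and p̂(tx) = (1/|M|)·(k + ∑_{tx' ∈ M} (ln v(tx) − ln v(tx'))/λ). Suppose 0 ≤ p̂(tx) ≤ 1 for all tx ∈ M. Then there exists w > 0 such that v(tx)·exp(−λ·p̂(tx)) = w for all tx ∈ M; consequently p̂ satisfies the equilibrium threshold conditions with threshold w. -/

import Mathlib

theorem weak_equilibrium {ι : Type*} (M : Finset ι) (hM : M.Nonempty)
    (lam : ℝ) (hlam : 0 < lam) (v : ι → ℝ) (hv : ∀ tx ∈ M, 0 < v tx)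
    (k : ℕ) (hk : k ≤ M.card)
    (phat : ι → ℝ)
    (hphat : ∀ tx ∈ M, phat tx = (1 / (M.card : ℝ)) *
        ((k : ℝ) + ∑ tx' ∈ M, (Real.log (v tx) - Real.log (v tx')) / lam))
    (hrange : ∀ tx ∈ M, 0 ≤ phat tx ∧ phat tx ≤ 1) :
    ∃ w : ℝ, 0 < w ∧ ∀ tx ∈ M,
      v tx * Real.exp (-lam * phat tx) = w ∧
      (phat tx = 0 → v tx * Real.exp (-lam * phat tx) ≤ w) ∧
      (0 < phat tx → phat tx < 1 → v tx * Real.exp (-lam * phat tx) = w) ∧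
      (phat tx = 1 → w ≤ v tx * Real.exp (-lam * phat tx)) := by
  set n : ℝ := (M.card : ℝ) with hn
  have hnpos : 0 < n := by
    rw [hn]
    exact_mod_cast Finset.card_pos.mpr hM
  set S : ℝ := ∑ tx' ∈ M, Real.log (v tx') with hS
  refine ⟨Real.exp ((S - lam * k) / n), Real.exp_pos _, ?_⟩
  intro tx htx
  have key : v tx * Real.exp (-lam * phat tx) = Real.exp ((S - lam * k) / n) := by
    rw [hphat tx htx]
    have hsum : ∑ tx' ∈ M, (Real.log (v tx) - Real.log (v tx')) / lam
        = (n * Real.log (v tx) - S) / lam := by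
      rw [← Finset.sum_div, Finset.sum_sub_distrib, Finset.sum_const, nsmul_eq_mul, ← hS, hn]
    rw [hsum]
    have hvtx : v tx = Real.exp (Real.log (v tx)) := (Real.exp_log (hv tx htx)).symm
    rw [hvtx, ← Real.exp_add]
    congr 1
    field_simp
    rw [Real.log_exp]
    ring
  refine ⟨key, fun _ => le_of_eq key, fun _ _ => key, fun _ => ge_of_eq key⟩
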